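/- For all natural n ≥ 1, ỹ_n + 2ỹ_{n+1} < 1 + c/2. -/

import Mathlib

noncomputable def c : ℝ := 4 / (9 - Real.sqrt 5)
noncomputable def φ : ℝ := (1 + Real.sqrt 5) / 2

noncomputable def ψ : ℝ := (1 - Real.sqrt 5) / 2

lemma s_sq : Real.sqrt 5 ^ 2 = 5 := Real.sq_sqrt (by norm_num)

lemma s_lb : (2.2 : ℝ) < Real.sqrt 5 := by
  nlinarith [s_sq, Real.sqrt_nonneg 5]

lemma s_ub : Real.sqrt 5 < 2.24 := by
  nlinarith [s_sq, Real.sqrt_nonneg 5]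

lemma phi_ne : φ ≠ 0 := by
  unfold φ; nlinarith [s_lb]

lemma phi_psi : φ * ψ = -1 := by
  unfold φ ψ; nlinarith [s_sq]

lemma phi_add_psi : φ + ψ = 1 := by
  unfold φ ψ; ring

lemma pow_shift (n : ℕ) (hn : 1 ≤ n) : ψ ^ n = ψ ^ (n - 1) * ψ := by
  obtain ⟨m, rfl⟩ : ∃ m, n = m + 1 := ⟨n - 1, by omega⟩
  simp [pow_succ]

lemma key (n : ℕ) : (-1 : ℝ) ^ n * φ ^ ((1 : ℤ) - (n : ℤ)) = φ * ψ ^ n := by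
  have hψ : ψ = -1 / φ := by
    rw [eq_div_iff phi_ne]; linear_combination phi_psi
  rw [zpow_sub₀ phi_ne, zpow_one, zpow_natCast, hψ, div_pow]
  field_simp

lemma closed_form (y : ℕ → ℝ) (h1 : y 1 = c)
    (hrec : ∀ n : ℕ, 1 ≤ n →
      2 * y (n + 1) = 2 * y n + c * (-1 : ℝ) ^ n * φ ^ ((1 : ℤ) - (n : ℤ))) :
    ∀ n : ℕ, 1 ≤ n → 2 * φ * y n = c * (2 * φ - 1) + c * ψ ^ (n - 1) := by
  intro n hn
  induction n, hn using Nat.le_induction with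
  | base => simp [h1]; ring
  | succ n hn ih =>
    have hr := hrec n hn
    rw [mul_assoc, key, pow_shift n hn] at hr
    rw [Nat.add_sub_cancel, pow_shift n hn]
    linear_combination φ * hr + ih + c * ψ ^ (n - 1) * φ * phi_psi
      - c * ψ ^ (n - 1) * phi_add_psi

theorem stmt7 (y : ℕ → ℝ) (h1 : y 1 = c) (h2 : y 2 = c / 2)
    (hrec : ∀ n : ℕ, 1 ≤ n →
      2 * y (n + 1) = 2 * y n + c * (-1 : ℝ) ^ n * φ ^ ((1 : ℤ) - (n : ℤ)))
    (n : ℕ) (hn : 1 ≤ n) :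
    y n + 2 * y (n + 1) < 1 + c / 2 := by
  have cf := closed_form y h1 hrec
  have e1 := cf n hn
  have e2 := cf (n + 1) (by omega)
  have hn1 : n + 1 - 1 = n := rfl
  rw [hn1, pow_shift n hn] at e2
  set t := ψ ^ (n - 1) with ht
  have hs2 := s_sq
  have hsl := s_lb
  have hsu := s_ub
  have habs : |ψ| ≤ 1 := by
    unfold ψ; rw [abs_le]; constructor <;> nlinarith
  have htb : |t| ≤ 1 := by
    rw [ht, abs_pow]; exact pow_le_one₀ (abs_nonneg _) habs
  rw [abs_le] at htb
  obtain ⟨htl, htu⟩ := htb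
  have hφ : φ = (1 + Real.sqrt 5) / 2 := rfl
  have hψ : ψ = (1 - Real.sqrt 5) / 2 := rfl
  have hφpos : (0:ℝ) < φ := by rw [hφ]; nlinarith
  have hden : (0:ℝ) < 9 - Real.sqrt 5 := by nlinarith
  have h9 : (9 - Real.sqrt 5) ≠ 0 := ne_of_gt hden
  have hceq : c = 4 / (9 - Real.sqrt 5) := rfl
  have hcpos : (0:ℝ) < c := by rw [hceq]; positivity
  have hcomb : 2 * φ * (y n + 2 * y (n + 1))
      = 3 * c * (2 * φ - 1) + c * t + 2 * c * (ψ * t) := by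
    linear_combination e1 + 2 * e2
  have hkey : 3 * c * (2 * φ - 1) + c * t + 2 * c * (ψ * t)
      < (1 + c / 2) * (2 * φ) := by
    have hc : c * (9 - Real.sqrt 5) = 4 := by rw [hceq]; field_simp
    set s := Real.sqrt 5 with hsdef
    have lhsE : (3 * c * (2 * ((1 + s) / 2) - 1) + c * t + 2 * c * ((1 - s) / 2 * t))
        * (9 - s) = 12 * s + (8 - 4 * s) * t := by
      linear_combination (3 * s + t + (1 - s) * t) * hc
    have rhsE : (1 + c / 2) * (2 * ((1 + s) / 2)) * (9 - s)
        = (1 + s) * (9 - s) + 2 * (1 + s) := by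
      linear_combination ((1 + s) / 2) * hc
    rw [hφ, hψ, ← mul_lt_mul_iff_of_pos_right hden, lhsE, rhsE]
    nlinarith [mul_nonneg (by linarith : (0:ℝ) ≤ 1 + t)
      (by nlinarith : (0:ℝ) ≤ 4 * s - 8)]
  have hlt := hcomb.trans_lt hkey
  nlinarith [hlt, hφpos]
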